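/- Let m ≥ 3 and 0 < w < 1. Define the Bessel kernel k_w(x) = Γ(w/2)^{-1} ∫_0^∞ e^{-t} t^{(w-2)/2} K_t(x) dt for x ∈ ℝ^m \ {0}, where K_t(x) = (4πt)^{-m/2} e^{-|x|²/(4t)}. Then k_w(x) is finite and positive for x ≠ 0, and there is a constant C_w depending only on m and w such that k_w(x) ≤ C_w e^{-|x|/2} |x|^{-(m-w)} for all x ≠ 0. -/

import Mathlib

open MeasureTheory Set Real


lemma aux_invGamma {a c : ℝ} (ha : 0 < a) (hc : 0 < c) :
    IntegrableOn (fun t : ℝ => t ^ (-a - 1) * Real.exp (-(c / t))) (Set.Ioi 0) volume ∧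
    ∫ t in Set.Ioi (0:ℝ), t ^ (-a - 1) * Real.exp (-(c / t)) = c ^ (-a) * Real.Gamma a := by
  set g : ℝ → ℝ := fun y => y ^ (a - 1) * Real.exp (-(c * y)) with hg_def
  have hg : IntegrableOn g (Set.Ioi 0) volume := by
    have := integrableOn_rpow_mul_exp_neg_mul_rpow (s := a - 1) (p := 1)
      (by linarith) one_pos hc
    simpa [Real.rpow_one] using this
  have key : ∀ t ∈ Set.Ioi (0:ℝ),
      (|(-1:ℝ)| * t ^ ((-1:ℝ) - 1)) • g (t ^ (-1:ℝ)) = t ^ (-a - 1) * Real.exp (-(c / t)) := by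
    intro t ht
    have ht0 : (0:ℝ) < t := ht
    simp only [hg_def, abs_neg, abs_one, one_mul, smul_eq_mul, Real.rpow_neg_one]
    rw [Real.inv_rpow ht0.le, ← Real.rpow_neg ht0.le, ← mul_assoc, ← Real.rpow_add ht0,
      ← div_eq_mul_inv]
    congr 1
    ring
  constructor
  · have h1 := (integrableOn_Ioi_comp_rpow_iff g (p := (-1:ℝ)) (by norm_num)).mpr hg
    exact (integrableOn_congr_fun key measurableSet_Ioi).mp h1
  · have h2 := integral_comp_rpow_Ioi g (p := (-1:ℝ)) (by norm_num)
    rw [setIntegral_congr_fun measurableSet_Ioi key] at h2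
    rw [h2, hg_def]
    rw [integral_rpow_mul_exp_neg_mul_Ioi ha hc]
    rw [one_div, ← Real.rpow_neg_one c, ← Real.rpow_mul hc.le]
    norm_num



open MeasureTheory

/-- The Gaussian heat kernel `K_t(x) = (4πt)^{-m/2} e^{-|x|²/(4t)}` on `ℝ^m`. -/
noncomputable def heatKernel (m : ℕ) (t : ℝ) (x : EuclideanSpace ℝ (Fin m)) : ℝ :=
  (4 * Real.pi * t) ^ (-(m : ℝ) / 2) * Real.exp (-‖x‖ ^ 2 / (4 * t))

/-- The Bessel kernel `k_w(x) = Γ(w/2)⁻¹ ∫_0^∞ e^{-t} t^{(w-2)/2} K_t(x) dt`. -/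
noncomputable def besselKernel (m : ℕ) (w : ℝ) (x : EuclideanSpace ℝ (Fin m)) : ℝ :=
  (Real.Gamma (w / 2))⁻¹ *
    ∫ t in Set.Ioi (0:ℝ), Real.exp (-t) * t ^ ((w - 2) / 2) * heatKernel m t x

/-- for `m ≥ 3` and `0 < w < 1`, `k_w(x)` is finite (the defining
integral converges) and positive for `x ≠ 0`, and there is a constant `C_w` with
`k_w(x) ≤ C_w e^{-|x|/2} |x|^{-(m-w)}` for all `x ≠ 0`. -/
theorem stmt13 (m : ℕ) (hm : 3 ≤ m) (w : ℝ) (hw0 : 0 < w) (hw1 : w < 1) :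
    (∀ x : EuclideanSpace ℝ (Fin m), x ≠ 0 →
      IntegrableOn (fun t : ℝ => Real.exp (-t) * t ^ ((w - 2) / 2) * heatKernel m t x)
        (Set.Ioi 0) volume ∧ 0 < besselKernel m w x) ∧
    ∃ C : ℝ, 0 < C ∧ ∀ x : EuclideanSpace ℝ (Fin m), x ≠ 0 →
      besselKernel m w x ≤ C * Real.exp (-‖x‖ / 2) * ‖x‖ ^ (-((m : ℝ) - w)) := by
  have hm3 : (3:ℝ) ≤ (m:ℝ) := by exact_mod_cast hm
  set a : ℝ := ((m:ℝ) - w) / 2 with ha_def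
  have ha : 0 < a := by rw [ha_def]; linarith
  have hGw : 0 < Real.Gamma (w / 2) := Real.Gamma_pos_of_pos (by linarith)
  have hGa : 0 < Real.Gamma a := Real.Gamma_pos_of_pos ha
  have h4π : (0:ℝ) < 4 * Real.pi := by positivity
  -- per-x facts
  have key : ∀ x : EuclideanSpace ℝ (Fin m), x ≠ 0 →
      IntegrableOn (fun t : ℝ => Real.exp (-t) * t ^ ((w - 2) / 2) * heatKernel m t x)
        (Set.Ioi 0) volume ∧
      (0 < ∫ t in Set.Ioi (0:ℝ), Real.exp (-t) * t ^ ((w - 2) / 2) * heatKernel m t x) ∧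
      (∫ t in Set.Ioi (0:ℝ), Real.exp (-t) * t ^ ((w - 2) / 2) * heatKernel m t x) ≤
        (4 * Real.pi) ^ (-(m:ℝ) / 2) * Real.exp (-‖x‖ / 2) *
          ((‖x‖ ^ 2 / 8) ^ (-a) * Real.Gamma a) := by
    intro x hx
    set r : ℝ := ‖x‖ with hr_def
    have hr : 0 < r := by rw [hr_def]; exact norm_pos_iff.mpr hx
    set f : ℝ → ℝ := fun t => Real.exp (-t) * t ^ ((w - 2) / 2) * heatKernel m t x with hf_def
    set c : ℝ := r ^ 2 / 8 with hc_def
    have hc : 0 < c := by positivity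
    obtain ⟨hgint, hgval⟩ := aux_invGamma ha hc
    set g : ℝ → ℝ := fun t =>
      (4 * Real.pi) ^ (-(m:ℝ) / 2) * Real.exp (-r / 2) * (t ^ (-a - 1) * Real.exp (-(c / t)))
      with hg_def
    have hgint' : IntegrableOn g (Set.Ioi 0) volume := hgint.const_mul _
    have hfpos : ∀ t ∈ Set.Ioi (0:ℝ), 0 < f t := by
      intro t ht
      have ht0 : (0:ℝ) < t := ht
      have h1 : (0:ℝ) < 4 * Real.pi * t := by positivity
      exact mul_pos (mul_pos (Real.exp_pos _) (Real.rpow_pos_of_pos ht0 _))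
        (mul_pos (Real.rpow_pos_of_pos h1 _) (Real.exp_pos _))
    have hfg : ∀ t ∈ Set.Ioi (0:ℝ), f t ≤ g t := by
      intro t ht
      have ht0 : (0:ℝ) < t := ht
      have hpow : t ^ ((w - 2) / 2) * t ^ (-(m:ℝ) / 2) = t ^ (-a - 1) := by
        rw [← Real.rpow_add ht0]
        congr 1
        rw [ha_def]; ring
      have hexp : Real.exp (-t) * Real.exp (-r ^ 2 / (4 * t)) ≤
          Real.exp (-r / 2) * Real.exp (-(c / t)) := by
        rw [← Real.exp_add, ← Real.exp_add, Real.exp_le_exp, neg_div]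
        have hu : r ^ 2 / (4 * t) * (4 * t) = r ^ 2 := by field_simp
        have hv : c / t * t = c := by field_simp
        have h8 : 8 * c = r ^ 2 := by rw [hc_def]; ring
        nlinarith [sq_nonneg (t - r / 4), sq_nonneg r, ht0]
      calc f t = (4 * Real.pi) ^ (-(m:ℝ) / 2) * t ^ (-a - 1) *
            (Real.exp (-t) * Real.exp (-r ^ 2 / (4 * t))) := by
            rw [hf_def]
            simp only [heatKernel, ← hr_def]
            rw [Real.mul_rpow h4π.le ht0.le, ← hpow]
            ring
        _ ≤ (4 * Real.pi) ^ (-(m:ℝ) / 2) * t ^ (-a - 1) *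
            (Real.exp (-r / 2) * Real.exp (-(c / t))) := by
            have hnn : (0:ℝ) ≤ (4 * Real.pi) ^ (-(m:ℝ) / 2) * t ^ (-a - 1) :=
              mul_nonneg (Real.rpow_nonneg h4π.le _) (Real.rpow_nonneg ht0.le _)
            exact mul_le_mul_of_nonneg_left hexp hnn
        _ = g t := by rw [hg_def]; ring
    have hfmeas : AEStronglyMeasurable f (volume.restrict (Set.Ioi 0)) := by
      apply Measurable.aestronglyMeasurable
      rw [hf_def]
      unfold heatKernel
      fun_prop
    have hfint : IntegrableOn f (Set.Ioi 0) volume := by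
      apply Integrable.mono' hgint' hfmeas
      filter_upwards [ae_restrict_mem measurableSet_Ioi] with t ht
      rw [Real.norm_eq_abs, abs_of_pos (hfpos t ht)]
      exact hfg t ht
    refine ⟨hfint, ?_, ?_⟩
    · rw [setIntegral_pos_iff_support_of_nonneg_ae ?_ hfint]
      · refine lt_of_lt_of_le ?_ (measure_mono (fun t ht => ⟨(hfpos t ht).ne', ht⟩))
        simp [Real.volume_Ioi]
      · filter_upwards [ae_restrict_mem measurableSet_Ioi] with t ht
        exact (hfpos t ht).le
    · calc (∫ t in Set.Ioi (0:ℝ), f t) ≤ ∫ t in Set.Ioi (0:ℝ), g t :=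
            setIntegral_mono_on hfint hgint' measurableSet_Ioi hfg
        _ = (4 * Real.pi) ^ (-(m:ℝ) / 2) * Real.exp (-r / 2) * (c ^ (-a) * Real.Gamma a) := by
            rw [hg_def]
            rw [integral_const_mul, hgval]
        _ = _ := by rw [hc_def, hr_def]
  constructor
  · intro x hx
    obtain ⟨h1, h2, _⟩ := key x hx
    exact ⟨h1, mul_pos (inv_pos.mpr hGw) h2⟩
  · refine ⟨(Real.Gamma (w / 2))⁻¹ * ((4 * Real.pi) ^ (-(m:ℝ) / 2) * ((8:ℝ) ^ a * Real.Gamma a)),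
      by positivity, ?_⟩
    intro x hx
    obtain ⟨-, -, h3⟩ := key x hx
    have hr : 0 < ‖x‖ := norm_pos_iff.mpr hx
    have hrw : (‖x‖ ^ 2 / 8) ^ (-a) = (8:ℝ) ^ a * ‖x‖ ^ (-((m:ℝ) - w)) := by
      rw [Real.div_rpow (by positivity) (by norm_num)]
      rw [← Real.rpow_natCast ‖x‖ 2, ← Real.rpow_mul hr.le]
      rw [Real.rpow_neg (by norm_num : (0:ℝ) ≤ 8)]
      rw [div_eq_mul_inv, inv_inv, mul_comm]
      congr 1
      push_cast
      rw [ha_def]; ring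
    unfold besselKernel
    calc (Real.Gamma (w / 2))⁻¹ *
          ∫ t in Set.Ioi (0:ℝ), Real.exp (-t) * t ^ ((w - 2) / 2) * heatKernel m t x
        ≤ (Real.Gamma (w / 2))⁻¹ * ((4 * Real.pi) ^ (-(m:ℝ) / 2) * Real.exp (-‖x‖ / 2) *
            ((‖x‖ ^ 2 / 8) ^ (-a) * Real.Gamma a)) :=
          mul_le_mul_of_nonneg_left h3 (inv_pos.mpr hGw).le
      _ = _ := by rw [hrw]; ring
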